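/- For every vector x ∈ [0,1]^n, the function X ↦ (1/λ)·‖X·Diag(√x)·Aᵀ − I_d‖_F² + ‖X‖_F² over X ∈ ℝ^{d×n} attains its infimum, and its minimum value equals tr((Σ_{i=1}^n x_i a_i a_iᵀ + λ I_d)⁻¹). -/

import Mathlib

open Matrix Finset

noncomputable section


/-- The information matrix `∑_{i ∈ S} a_i a_iᵀ + λ I_d`. -/
def infoM (d n : ℕ) (a : Fin n → Fin d → ℝ) (lam : ℝ) (S : Finset (Fin n)) :
    Matrix (Fin d) (Fin d) ℝ :=
  (∑ i ∈ S, Matrix.vecMulVec (a i) (a i)) + lam • (1 : Matrix (Fin d) (Fin d) ℝ)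

/-- `f(S) = tr((∑_{i∈S} a_i a_iᵀ + λ I_d)⁻¹)`. -/
def fS (d n : ℕ) (a : Fin n → Fin d → ℝ) (lam : ℝ) (S : Finset (Fin n)) : ℝ :=
  Matrix.trace (infoM d n a lam S)⁻¹

/-- `z_k = min_{|S| = k} f(S)`. -/
def zk (d n : ℕ) (a : Fin n → Fin d → ℝ) (lam : ℝ) (k : ℕ) : ℝ :=
  sInf {r : ℝ | ∃ S : Finset (Fin n), S.card = k ∧ fS d n a lam S = r}

/-- The `d × n` matrix whose `i`-th column is `a_i`. -/
def Amat (d n : ℕ) (a : Fin n → Fin d → ℝ) : Matrix (Fin d) (Fin n) ℝ :=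
  Matrix.of fun i j => a j i

/-- The matrix `∑_i x_i a_i a_iᵀ + λ I_d` for a fractional vector `x`. -/
def contM (d n : ℕ) (a : Fin n → Fin d → ℝ) (lam : ℝ) (x : Fin n → ℝ) :
    Matrix (Fin d) (Fin d) ℝ :=
  (∑ i : Fin n, x i • Matrix.vecMulVec (a i) (a i)) + lam • (1 : Matrix (Fin d) (Fin d) ℝ)

/-- The continuous relaxation value `ν_k^C`. -/
def nuC (d n : ℕ) (a : Fin n → Fin d → ℝ) (lam : ℝ) (k : ℕ) : ℝ :=
  sInf {r : ℝ | ∃ x : Fin n → ℝ, (∀ i, 0 ≤ x i ∧ x i ≤ 1) ∧ (∑ i, x i) = (k : ℝ) ∧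
    Matrix.trace (contM d n a lam x)⁻¹ = r}

/-- The squared Frobenius norm `‖M‖_F²`. -/
def fro2 {m p : ℕ} (M : Matrix (Fin m) (Fin p) ℝ) : ℝ := ∑ i, ∑ j, (M i j) ^ 2

end

section Aux

open Matrix

lemma fro2_eq_trace {m p : ℕ} (M : Matrix (Fin m) (Fin p) ℝ) :
    fro2 M = (M * Mᵀ).trace := by
  simp [fro2, Matrix.trace, Matrix.mul_apply, Matrix.diag, sq]

lemma trace_nonneg_of_posSemidef {m : ℕ} {P : Matrix (Fin m) (Fin m) ℝ}
    (hP : P.PosSemidef) : 0 ≤ P.trace := by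
  apply Finset.sum_nonneg
  intro i _
  exact hP.diag_nonneg

end Aux

theorem stmt6 (d n : ℕ) (hd : 1 ≤ d) (hdn : d ≤ n)
    (a : Fin n → Fin d → ℝ) (lam : ℝ) (hlam : 0 < lam)
    (x : Fin n → ℝ) (hx : ∀ i, 0 ≤ x i ∧ x i ≤ 1) :
    ∃ X0 : Matrix (Fin d) (Fin n) ℝ,
      (∀ X : Matrix (Fin d) (Fin n) ℝ,
        (1 / lam) * fro2 (X0 * Matrix.diagonal (fun i => Real.sqrt (x i)) * (Amat d n a)ᵀ -
            (1 : Matrix (Fin d) (Fin d) ℝ)) + fro2 X0 ≤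
        (1 / lam) * fro2 (X * Matrix.diagonal (fun i => Real.sqrt (x i)) * (Amat d n a)ᵀ -
            (1 : Matrix (Fin d) (Fin d) ℝ)) + fro2 X) ∧
      (1 / lam) * fro2 (X0 * Matrix.diagonal (fun i => Real.sqrt (x i)) * (Amat d n a)ᵀ -
          (1 : Matrix (Fin d) (Fin d) ℝ)) + fro2 X0 =
        Matrix.trace (contM d n a lam x)⁻¹ := by
  classical
  have hdne : Nonempty (Fin d) := ⟨⟨0, hd⟩⟩
  set A : Matrix (Fin d) (Fin n) ℝ := Amat d n a with hAdef
  set D : Matrix (Fin n) (Fin n) ℝ := Matrix.diagonal (fun i => Real.sqrt (x i)) with hDdef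
  set B : Matrix (Fin d) (Fin n) ℝ := A * D with hBdef
  set M : Matrix (Fin d) (Fin d) ℝ := contM d n a lam x with hMdef
  set N : Matrix (Fin n) (Fin n) ℝ := Bᵀ * B + lam • 1 with hNdef
  -- M = B * Bᵀ + lam • 1
  have hB_entry : ∀ i k, B i k = a k i * Real.sqrt (x k) := by
    intro i k
    rw [hBdef, hDdef, Matrix.mul_diagonal, hAdef]
    rfl
  have hM_eq : M = B * Bᵀ + lam • 1 := by
    rw [hMdef]
    ext i j
    simp only [contM, Matrix.add_apply, Matrix.smul_apply, Matrix.sum_apply,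
      Matrix.vecMulVec_apply, Matrix.mul_apply, Matrix.transpose_apply,
      hB_entry, smul_eq_mul]
    congr 1
    apply Finset.sum_congr rfl
    intro k _
    have h : Real.sqrt (x k) * Real.sqrt (x k) = x k := Real.mul_self_sqrt (hx k).1
    linear_combination -(a k i * a k j) * h
  -- rewrite the goal's product
  have hgoal : ∀ X : Matrix (Fin d) (Fin n) ℝ, X * D * Aᵀ = X * Bᵀ := by
    intro X
    rw [hBdef, Matrix.transpose_mul, Matrix.diagonal_transpose, Matrix.mul_assoc]
  -- positive semidefiniteness of the Gram matrices
  have hBBT : (B * Bᵀ).PosSemidef := by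
    have := Matrix.posSemidef_self_mul_conjTranspose B
    rwa [Matrix.conjTranspose_eq_transpose_of_trivial] at this
  have hBTB : (Bᵀ * B).PosSemidef := by
    have := Matrix.posSemidef_conjTranspose_mul_self B
    rwa [Matrix.conjTranspose_eq_transpose_of_trivial] at this
  clear_value N M B D A
  have hlam1d : (lam • (1 : Matrix (Fin d) (Fin d) ℝ)).PosDef := by
    rw [Matrix.smul_one_eq_diagonal]
    exact Matrix.posDef_diagonal_iff.mpr fun _ => hlam
  have hlam1n : (lam • (1 : Matrix (Fin n) (Fin n) ℝ)).PosDef := by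
    rw [Matrix.smul_one_eq_diagonal]
    exact Matrix.posDef_diagonal_iff.mpr fun _ => hlam
  have hMpd : M.PosDef := by
    rw [hM_eq]; exact Matrix.PosDef.posSemidef_add hBBT hlam1d
  have hNpd : N.PosDef := by
    rw [hNdef]; exact Matrix.PosDef.posSemidef_add hBTB hlam1n
  have hMdet : IsUnit M.det := hMpd.det_pos.ne'.isUnit
  have hNdet : IsUnit N.det := hNpd.det_pos.ne'.isUnit
  -- the minimizer
  set X0 : Matrix (Fin d) (Fin n) ℝ := B * N⁻¹ with hX0def
  have hX0N : X0 * N = B := by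
    rw [hX0def, Matrix.mul_assoc, Matrix.nonsing_inv_mul N hNdet, Matrix.mul_one]
  have hNsymm : Nᵀ = N := by
    rw [hNdef]
    simp [Matrix.transpose_add, Matrix.transpose_mul, Matrix.transpose_smul,
      Matrix.transpose_one, Matrix.transpose_transpose]
  have hNX0T : N * X0ᵀ = Bᵀ := by
    have := congrArg Matrix.transpose hX0N
    rwa [Matrix.transpose_mul, hNsymm] at this
  -- push-through
  have hMB : M * B = B * N := by
    rw [hM_eq, hNdef]
    simp only [Matrix.add_mul, Matrix.mul_add, Matrix.smul_mul, Matrix.mul_smul,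
      Matrix.one_mul, Matrix.mul_one, Matrix.mul_assoc]
  have hMX0 : M * X0 = B := by
    rw [hX0def, ← Matrix.mul_assoc, hMB, Matrix.mul_assoc,
      Matrix.mul_nonsing_inv N hNdet, Matrix.mul_one]
  have hX0M : X0 = M⁻¹ * B := by
    rw [← hMX0, ← Matrix.mul_assoc, Matrix.nonsing_inv_mul M hMdet, Matrix.one_mul]
  have hX0BT : X0 * Bᵀ = 1 - lam • M⁻¹ := by
    have hBBT' : B * Bᵀ = M - lam • 1 := by rw [hM_eq]; abel
    rw [hX0M, Matrix.mul_assoc, hBBT', Matrix.mul_sub, Matrix.nonsing_inv_mul M hMdet,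
      Matrix.mul_smul, Matrix.mul_one]
  -- key matrix-level identity
  have keyM : ∀ X : Matrix (Fin d) (Fin n) ℝ,
      (X * Bᵀ - 1) * (X * Bᵀ - 1)ᵀ + lam • (X * Xᵀ)
        = (X - X0) * N * (X - X0)ᵀ + lam • M⁻¹ := by
    intro X
    have e1 : (X * Bᵀ - 1) * (X * Bᵀ - 1)ᵀ
        = X * Bᵀ * (X * Bᵀ)ᵀ - X * Bᵀ - (X * Bᵀ)ᵀ + 1 := by
      simp only [Matrix.transpose_sub, Matrix.transpose_one, Matrix.sub_mul,
        Matrix.mul_sub, Matrix.one_mul, Matrix.mul_one]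
      abel
    have h2 : X0 * (N * Xᵀ) = (X * Bᵀ)ᵀ := by
      rw [← Matrix.mul_assoc, hX0N, Matrix.transpose_mul, Matrix.transpose_transpose]
    have e2 : (X - X0) * N * (X - X0)ᵀ
        = X * (N * Xᵀ) - X * Bᵀ - (X * Bᵀ)ᵀ + X0 * Bᵀ := by
      calc (X - X0) * N * (X - X0)ᵀ
          = X * (N * Xᵀ) - X * (N * X0ᵀ) - X0 * (N * Xᵀ) + X0 * (N * X0ᵀ) := by
            simp only [Matrix.transpose_sub, Matrix.sub_mul, Matrix.mul_sub,
              Matrix.mul_assoc]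
            abel
        _ = X * (N * Xᵀ) - X * Bᵀ - (X * Bᵀ)ᵀ + X0 * Bᵀ := by rw [hNX0T, h2]
    have e3 : X * (N * Xᵀ) = X * Bᵀ * (X * Bᵀ)ᵀ + lam • (X * Xᵀ) := by
      rw [hNdef, Matrix.transpose_mul, Matrix.transpose_transpose]
      simp only [Matrix.add_mul, Matrix.mul_add, Matrix.smul_mul, Matrix.mul_smul,
        Matrix.one_mul, Matrix.mul_assoc]
    have h4 : (1 : Matrix (Fin d) (Fin d) ℝ) = X0 * Bᵀ + lam • M⁻¹ := by
      rw [hX0BT]; abel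
    rw [e1, e2, e3, h4]
    abel
  -- scalar version
  have key : ∀ X : Matrix (Fin d) (Fin n) ℝ,
      fro2 (X * Bᵀ - 1) + lam * fro2 X
        = ((X - X0) * N * (X - X0)ᵀ).trace + lam * (M⁻¹).trace := by
    intro X
    have h := congrArg Matrix.trace (keyM X)
    rw [Matrix.trace_add, Matrix.trace_add, Matrix.trace_smul, Matrix.trace_smul] at h
    rw [fro2_eq_trace, fro2_eq_trace]
    simpa [smul_eq_mul] using h
  have hz : ((X0 - X0) * N * (X0 - X0)ᵀ).trace = 0 := by
    simp [sub_self, Matrix.zero_mul, Matrix.mul_zero]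
  refine ⟨X0, ?_, ?_⟩
  · intro X
    rw [hgoal, hgoal]
    have hk0 := key X0
    have hkX := key X
    rw [hz, zero_add] at hk0
    have hpos : 0 ≤ ((X - X0) * N * (X - X0)ᵀ).trace := by
      apply trace_nonneg_of_posSemidef
      have := hNpd.posSemidef.mul_mul_conjTranspose_same (X - X0)
      rwa [Matrix.conjTranspose_eq_transpose_of_trivial] at this
    have hlne : lam ≠ 0 := ne_of_gt hlam
    generalize hT : (M⁻¹).trace = t at hk0 hkX
    generalize hS : ((X - X0) * N * (X - X0)ᵀ).trace = s at hkX hpos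
    have e0 : fro2 (X0 * Bᵀ - 1) = lam * t - lam * fro2 X0 := by linarith
    have eX : fro2 (X * Bᵀ - 1) = s + lam * t - lam * fro2 X := by linarith
    rw [e0, eX]
    have h1 : 1 / lam * (lam * t - lam * fro2 X0) + fro2 X0 = t := by
      field_simp
      ring
    have h2 : 1 / lam * (s + lam * t - lam * fro2 X) + fro2 X = s / lam + t := by
      field_simp
      ring
    rw [h1, h2]
    have : 0 ≤ s / lam := div_nonneg hpos hlam.le
    linarith
  · rw [hgoal]
    have hk0 := key X0
    rw [hz, zero_add] at hk0
    have hlne : lam ≠ 0 := ne_of_gt hlam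
    generalize hT : (M⁻¹).trace = t at hk0 ⊢
    have e0 : fro2 (X0 * Bᵀ - 1) = lam * t - lam * fro2 X0 := by linarith
    rw [e0]
    field_simp
    ring
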